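/- Let L be the combinatorial Laplacian of a weighted graph G on N vertices, C ∈ ℝ^{n×N} a coarsening matrix, and L̃ = C L Cᵀ the coarsened Laplacian. Then for every k with 1 ≤ k ≤ n, the k-th smallest eigenvalue of L is at most the k-th smallest eigenvalue of L̃, i.e. λ_k ≤ λ̃_k. -/

import Mathlib

open Matrix

/-- The combinatorial Laplacian `L = D - W` of a weighted graph with weight matrix `W`,
where `D` is the diagonal matrix of weighted degrees `d_i = Σ_j W i j`. -/
def lap {N : ℕ} (W : Matrix (Fin N) (Fin N) ℝ) : Matrix (Fin N) (Fin N) ℝ :=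
  Matrix.diagonal (fun i => ∑ j, W i j) - W

/-- `W` is the weight matrix of a weighted graph: symmetric, nonnegative, zero diagonal. -/
def IsWeightedGraph {N : ℕ} (W : Matrix (Fin N) (Fin N) ℝ) : Prop :=
  (∀ i j, W i j = W j i) ∧ (∀ i j, 0 ≤ W i j) ∧ (∀ i, W i i = 0)

/-- A coarsening matrix `C : ℝ^{n×N}`. -/
def IsCoarsening {n N : ℕ} (C : Matrix (Fin n) (Fin N) ℝ) : Prop :=
  ∃ φ : Fin N → Fin n, Function.Surjective φ ∧
    ∀ i j, C i j =
      if φ j = i then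
        (Real.sqrt ((Finset.univ.filter (fun j' : Fin N => φ j' = i)).card : ℝ))⁻¹
      else 0

/-- linearity helpers -/
lemma sum_smul_dotProduct {ι m : Type*} [Fintype ι] [Fintype m]
    (a : ι → ℝ) (u : ι → m → ℝ) (w : m → ℝ) :
    (∑ i, a i • u i) ⬝ᵥ w = ∑ i, a i * (u i ⬝ᵥ w) := by
  simp [dotProduct, Finset.sum_apply, Finset.sum_mul, Finset.mul_sum, mul_assoc]
  rw [Finset.sum_comm]

lemma dotProduct_sum_smul {ι m : Type*} [Fintype ι] [Fintype m]
    (a : ι → ℝ) (u : ι → m → ℝ) (w : m → ℝ) :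
    w ⬝ᵥ (∑ i, a i • u i) = ∑ i, a i * (w ⬝ᵥ u i) := by
  rw [dotProduct_comm, sum_smul_dotProduct]
  simp [dotProduct_comm]

lemma dot_ortho {ι m : Type*} [Fintype ι] [DecidableEq ι] [Fintype m] (u : ι → m → ℝ)
    (h : ∀ i j, u i ⬝ᵥ u j = if i = j then (1:ℝ) else 0) (a b : ι → ℝ) :
    (∑ i, a i • u i) ⬝ᵥ (∑ i, b i • u i) = ∑ i, a i * b i := by
  rw [sum_smul_dotProduct]
  refine Finset.sum_congr rfl fun i _ => ?_
  rw [dotProduct_sum_smul]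
  simp [h, Finset.mul_sum, mul_comm]

lemma mulVec_sum_smul {ι m p : Type*} [Fintype ι] [Fintype m]
    (M : Matrix p m ℝ) (a : ι → ℝ) (u : ι → m → ℝ) :
    M *ᵥ (∑ i, a i • u i) = ∑ i, a i • (M *ᵥ u i) := by
  rw [← Matrix.mulVecLin_apply, map_sum]
  simp [Matrix.mulVecLin_apply]


/-- eigenvalue interlacing `λ_k ≤ λ̃_k` for the coarsened Laplacian
`L̃ = C L Cᵀ`.  The eigenvalues of `L` (resp. `L̃`) are described by a monotone family
`lam` (resp. `lamt`) together with an orthonormal basis of eigenvectors. -/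
theorem coarsening_eigenvalue_interlacing {n N : ℕ} (hn : n ≤ N)
    (W : Matrix (Fin N) (Fin N) ℝ) (hW : IsWeightedGraph W)
    (C : Matrix (Fin n) (Fin N) ℝ) (hC : IsCoarsening C)
    (lam : Fin N → ℝ) (x : Fin N → Fin N → ℝ)
    (hmono : Monotone lam)
    (hortho : ∀ i j, x i ⬝ᵥ x j = if i = j then (1 : ℝ) else 0)
    (heig : ∀ i, lap W *ᵥ x i = lam i • x i)
    (lamt : Fin n → ℝ) (xt : Fin n → Fin n → ℝ)
    (hmonot : Monotone lamt)
    (horthot : ∀ i j, xt i ⬝ᵥ xt j = if i = j then (1 : ℝ) else 0)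
    (heigt : ∀ i, (C * lap W * Cᵀ) *ᵥ xt i = lamt i • xt i) :
    ∀ k : Fin n, lam (Fin.castLE hn k) ≤ lamt k := by
  -- C has orthonormal rows
  have hCC : C * Cᵀ = 1 := by
    obtain ⟨φ, hsurj, hform⟩ := hC
    ext i i'
    simp only [Matrix.mul_apply, Matrix.transpose_apply, Matrix.one_apply]
    by_cases hii : i = i'
    · subst hii
      simp only [if_pos rfl]
      have hcard : 0 < ((Finset.univ.filter (fun j' : Fin N => φ j' = i)).card : ℝ) := by
        obtain ⟨j, hj⟩ := hsurj i
        have : j ∈ Finset.univ.filter (fun j' : Fin N => φ j' = i) := by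
          simp [hj]
        exact_mod_cast Finset.card_pos.mpr ⟨j, this⟩
      set m : ℝ := ((Finset.univ.filter (fun j' : Fin N => φ j' = i)).card : ℝ) with hm
      have hr : (Real.sqrt m)⁻¹ * (Real.sqrt m)⁻¹ = m⁻¹ := by
        rw [← mul_inv]
        rw [Real.mul_self_sqrt hcard.le]
      calc ∑ j, C i j * C i j
          = ∑ j, (if φ j = i then (Real.sqrt m)⁻¹ * (Real.sqrt m)⁻¹ else 0) := by
            refine Finset.sum_congr rfl fun j _ => ?_
            rw [hform i j]
            split <;> ring
        _ = ((Finset.univ.filter (fun j' : Fin N => φ j' = i)).card : ℝ) * m⁻¹ := by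
            rw [← Finset.sum_filter, Finset.sum_const, nsmul_eq_mul, hr]
        _ = 1 := by rw [← hm]; field_simp
    · simp only [if_neg hii]
      apply Finset.sum_eq_zero
      intro j _
      rw [hform i j, hform i' j]
      by_cases h1 : φ j = i
      · have : ¬ (φ j = i') := fun h2 => hii (h1 ▸ h2 ▸ rfl)
        simp [this]
      · simp [h1]
  -- the x's form an orthonormal basis: X^T X = 1
  have hXX : (Matrix.of x)ᵀ * (Matrix.of x) = 1 := by
    rw [mul_eq_one_comm]
    ext i j
    simpa [Matrix.mul_apply, dotProduct, Matrix.one_apply] using hortho i j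
  intro k
  set κ : ℕ := (k : ℕ) with hκ
  have hk1 : κ + 1 ≤ n := k.isLt
  have hκN : κ ≤ N := le_trans (Nat.le_of_succ_le hk1) hn
  set e : Fin (κ + 1) → Fin n := Fin.castLE hk1 with he
  -- find nonzero c in kernel of constraint matrix
  set M : Matrix (Fin κ) (Fin (κ + 1)) ℝ :=
    fun j i => x (Fin.castLE hκN j) ⬝ᵥ (Cᵀ *ᵥ xt (e i)) with hM
  have hker : LinearMap.ker M.mulVecLin ≠ ⊥ := by
    apply LinearMap.ker_ne_bot_of_finrank_lt
    simp [Module.finrank_fintype_fun_eq_card]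
  obtain ⟨c, hcker, hcne⟩ := (Submodule.ne_bot_iff _).mp hker
  have hMc : M *ᵥ c = 0 := hcker
  set y : Fin n → ℝ := ∑ i, c i • xt (e i) with hy
  set v : Fin N → ℝ := Cᵀ *ᵥ y with hv
  set S : ℝ := ∑ i, c i * c i with hS
  have heinj : ∀ i i' : Fin (κ+1), (e i = e i') ↔ i = i' := by
    intro i i'
    constructor
    · intro h; exact Fin.ext (by simpa [he, Fin.castLE] using congrArg Fin.val h)
    · intro h; rw [h]
  have horthoe : ∀ i j : Fin (κ+1), xt (e i) ⬝ᵥ xt (e j) = if i = j then (1:ℝ) else 0 := by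
    intro i j; rw [horthot]; simp [heinj i j]
  -- S > 0
  have hSpos : 0 < S := by
    obtain ⟨i0, hi0⟩ : ∃ i0, c i0 ≠ 0 := by
      by_contra h; push_neg at h; exact hcne (funext h)
    have h0 : 0 < c i0 * c i0 := mul_self_pos.mpr hi0
    exact lt_of_lt_of_le h0 (Finset.single_le_sum (fun i _ => mul_self_nonneg (c i)) (Finset.mem_univ i0))
  -- ‖y‖² = S
  have hyy : y ⬝ᵥ y = S := by
    rw [hy, dot_ortho _ horthoe]
  -- ‖v‖² = ‖y‖²
  have hvv : v ⬝ᵥ v = S := by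
    rw [hv, Matrix.dotProduct_mulVec, Matrix.vecMul_transpose, Matrix.mulVec_mulVec, hCC,
      Matrix.one_mulVec, hyy]
  -- quadratic form transfer
  have hquad : v ⬝ᵥ (lap W *ᵥ v) = y ⬝ᵥ ((C * lap W * Cᵀ) *ᵥ y) := by
    have h1 : Cᵀ *ᵥ y = y ᵥ* C := Matrix.mulVec_transpose C y
    rw [hv, Matrix.mulVec_mulVec, h1, Matrix.dotProduct_mulVec, Matrix.vecMul_vecMul,
      Matrix.dotProduct_mulVec, ← Matrix.mul_assoc]
  -- upper bound: y ⬝ (L̃ y) ≤ lamt k * S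
  have hupper : y ⬝ᵥ ((C * lap W * Cᵀ) *ᵥ y) ≤ lamt k * S := by
    have hLty : (C * lap W * Cᵀ) *ᵥ y = ∑ i, (c i * lamt (e i)) • xt (e i) := by
      rw [hy, mulVec_sum_smul]
      refine Finset.sum_congr rfl fun i _ => ?_
      rw [heigt (e i), smul_smul]
    rw [hLty, hy, dot_ortho _ horthoe]
    rw [hS, Finset.mul_sum]
    refine Finset.sum_le_sum fun i _ => ?_
    have h1 : lamt (e i) ≤ lamt k := by
      apply hmonot
      show (e i : ℕ) ≤ (k : ℕ)
      simpa [he, Fin.castLE] using Nat.lt_succ_iff.mp i.isLt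
    calc c i * (c i * lamt (e i)) = lamt (e i) * (c i * c i) := by ring
      _ ≤ lamt k * (c i * c i) := by
          exact mul_le_mul_of_nonneg_right h1 (mul_self_nonneg _)
  -- coefficients of v in the x basis
  set a : Fin N → ℝ := fun j => x j ⬝ᵥ v with ha
  have hva : v = ∑ j, a j • x j := by
    have h1 : v = ((Matrix.of x)ᵀ * (Matrix.of x)) *ᵥ v := by rw [hXX, Matrix.one_mulVec]
    rw [← Matrix.mulVec_mulVec] at h1
    have h2 : (Matrix.of x) *ᵥ v = a := by
      funext j; simp [Matrix.mulVec, ha, dotProduct]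
    rw [h2] at h1
    funext p
    rw [h1]
    simp [Matrix.mulVec, dotProduct, Finset.sum_apply, mul_comm]
  have hazero : ∀ j : Fin N, (j : ℕ) < κ → a j = 0 := by
    intro j hj
    have hj' : j = Fin.castLE hκN ⟨(j:ℕ), hj⟩ := by ext; simp
    have := congrFun hMc ⟨(j:ℕ), hj⟩
    simp only [Matrix.mulVec, Pi.zero_apply] at this
    have hvex : v = ∑ i, c i • (Cᵀ *ᵥ xt (e i)) := by rw [hv, hy, mulVec_sum_smul]
    show x j ⬝ᵥ v = 0
    rw [hj', hvex, dotProduct_sum_smul, ← this]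
    refine Finset.sum_congr rfl fun i _ => ?_
    rw [hM]
    simp [dotProduct, mul_comm]
  -- lower bound
  have hlower : lam (Fin.castLE hn k) * S ≤ v ⬝ᵥ (lap W *ᵥ v) := by
    have hLv : lap W *ᵥ v = ∑ j, (a j * lam j) • x j := by
      rw [hva, mulVec_sum_smul]
      refine Finset.sum_congr rfl fun j _ => ?_
      rw [heig j, smul_smul]
    have hvLv : v ⬝ᵥ (lap W *ᵥ v) = ∑ j, a j * (a j * lam j) := by
      rw [hLv, hva, dot_ortho _ hortho]
    have hvvS : ∑ j, a j * a j = S := by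
      rw [← hvv, hva, dot_ortho _ hortho]
    rw [hvLv, ← hvvS, Finset.mul_sum]
    refine Finset.sum_le_sum fun j _ => ?_
    by_cases hjk : κ ≤ (j : ℕ)
    · have h1 : lam (Fin.castLE hn k) ≤ lam j := by
        apply hmono
        show ((Fin.castLE hn k : Fin N) : ℕ) ≤ (j : ℕ)
        simpa [Fin.castLE] using hjk
      calc lam (Fin.castLE hn k) * (a j * a j) ≤ lam j * (a j * a j) :=
            mul_le_mul_of_nonneg_right h1 (mul_self_nonneg _)
        _ = a j * (a j * lam j) := by ring
    · push_neg at hjk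
      rw [hazero j hjk]; ring_nf; rfl
  -- conclude
  have : lam (Fin.castLE hn k) * S ≤ lamt k * S := by
    calc lam (Fin.castLE hn k) * S ≤ v ⬝ᵥ (lap W *ᵥ v) := hlower
      _ = y ⬝ᵥ ((C * lap W * Cᵀ) *ᵥ y) := hquad
      _ ≤ lamt k * S := hupper
  exact le_of_mul_le_mul_right this hSpos
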